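/- Let f : Y → X be a surjective, generalizing, spectral map of spectral spaces. Then f is a quotient map: a subset U ⊆ X is open if and only if f⁻¹(U) is open in Y. -/

import Mathlib

universe u v

/-- A spectral space: a quasicompact topological space with a basis of quasicompact open
subsets stable under finite intersection, in which every irreducible closed subset has a
unique generic point. -/
def IsSpectralSpace (X : Type u) [TopologicalSpace X] : Prop :=
  CompactSpace X ∧ T0Space X ∧ QuasiSober X ∧
    ∃ B : Set (Set X), TopologicalSpace.IsTopologicalBasis B ∧
      (∀ U ∈ B, IsCompact U) ∧ ∀ U ∈ B, ∀ V ∈ B, U ∩ V ∈ B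

/-- A subset is constructible if it lies in the Boolean algebra of subsets generated by the
quasicompact open subsets. -/
inductive IsConstructibleSet {X : Type u} [TopologicalSpace X] : Set X → Prop
  | qcOpen (U : Set X) : IsOpen U → IsCompact U → IsConstructibleSet U
  | compl (S : Set X) : IsConstructibleSet S → IsConstructibleSet Sᶜ
  | union (S T : Set X) : IsConstructibleSet S → IsConstructibleSet T →
      IsConstructibleSet (S ∪ T)

/-- A subset is pro-constructible if it is an intersection of constructible subsets. -/
def IsProconstructible {X : Type u} [TopologicalSpace X] (S : Set X) : Prop :=
  ∃ 𝒮 : Set (Set X), (∀ T ∈ 𝒮, IsConstructibleSet T) ∧ S = ⋂₀ 𝒮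

/-- A continuous map `f : X → Y` is generalizing if whenever `y ∈ Y` is a generalization of
`f x` (i.e. `f x` lies in the closure of `{y}`), there exists a generalization `x'` of `x`
(i.e. `x` lies in the closure of `{x'}`) with `f x' = y`. -/
def IsGeneralizing {X : Type u} {Y : Type v} [TopologicalSpace X] [TopologicalSpace Y]
    (f : X → Y) : Prop :=
  ∀ x : X, ∀ y : Y, f x ∈ closure ({y} : Set Y) →
    ∃ x' : X, x ∈ closure ({x'} : Set X) ∧ f x' = y

/-- In a chain of closed sets each meeting a compact set `K`, the intersection of the
chain still meets `K`. -/
lemma sInter_chain_inter_compact_nonempty {Y : Type u} [TopologicalSpace Y] {K : Set Y}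
    (hK : IsCompact K) (hKne : K.Nonempty) {c : Set (Set Y)} (hc : IsChain (· ⊆ ·) c)
    (hcl : ∀ D ∈ c, IsClosed D) (hne : ∀ D ∈ c, (D ∩ K).Nonempty) :
    (⋂₀ c ∩ K).Nonempty := by
  have h := hK.inter_iInter_nonempty (fun D : c => (D : Set Y))
    (fun D => hcl D D.2) ?_
  · obtain ⟨y, hy1, hy2⟩ := h
    refine ⟨y, ?_, hy1⟩
    simp only [Set.mem_iInter] at hy2
    exact fun D hD => hy2 ⟨D, hD⟩
  · intro u
    rcases u.eq_empty_or_nonempty with rfl | hu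
    · simpa using hKne
    · obtain ⟨i₀, hi₀u, hi₀min⟩ := u.exists_minimal hu
      have hmin : ∀ i ∈ u, (i₀ : Set Y) ⊆ (i : Set Y) := by
        intro i hiu
        by_cases hEq : (i : Set Y) = (i₀ : Set Y)
        · exact hEq.ge
        · rcases hc i.2 i₀.2 hEq with h1 | h1
          · exact absurd (hi₀min hiu (Subtype.coe_lt_coe.1 (lt_of_le_of_ne h1 hEq)).le) (not_le_of_gt (Subtype.coe_lt_coe.1 (lt_of_le_of_ne h1 hEq)))
          · exact h1
      obtain ⟨y, hyD, hyK⟩ := hne i₀ i₀.2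
      exact ⟨y, hyK, Set.mem_iInter₂.2 fun i hi => hmin i hi hyD⟩

/-- A surjective, generalizing, spectral map of spectral spaces is a quotient map: a subset
`U ⊆ X` is open if and only if `f ⁻¹' U` is open. -/
theorem isOpen_iff_isOpen_preimage_of_surjective_generalizing_spectral
    {Y : Type u} {X : Type v} [TopologicalSpace Y] [TopologicalSpace X]
    (hY : IsSpectralSpace Y) (hX : IsSpectralSpace X)
    (f : Y → X) (hf : IsSpectralMap f) (hsurj : Function.Surjective f)
    (hgen : IsGeneralizing f) :
    ∀ U : Set X, IsOpen U ↔ IsOpen (f ⁻¹' U) := by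
  obtain ⟨-, -, hsob, B, hB, hBc, hBi⟩ := hX
  haveI : QuasiSober Y := hY.2.2.1
  intro U
  refine ⟨fun h => h.preimage hf.continuous, fun h => ?_⟩
  rw [← isClosed_compl_iff]
  set Z : Set X := Uᶜ with hZdef
  set C : Set Y := f ⁻¹' Z with hCdef
  have hCcl : IsClosed C := by
    rw [hCdef, hZdef, Set.preimage_compl]
    exact isClosed_compl_iff.2 h
  rw [← closure_subset_iff_isClosed]
  intro x hx
  by_contra hxZ
  have hxU : x ∈ U := by simpa [hZdef] using hxZ
  -- the poset for Zorn's lemma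
  set S : Set (Set Y) := {D | IsClosed D ∧ D ⊆ C ∧ ∀ V ∈ B, x ∈ V → (D ∩ f ⁻¹' V).Nonempty}
    with hSdef
  have hCS : C ∈ S := by
    refine ⟨hCcl, subset_rfl, fun V hV hxV => ?_⟩
    obtain ⟨z, hzV, hzZ⟩ := mem_closure_iff.1 hx V (hB.isOpen hV) hxV
    obtain ⟨y, rfl⟩ := hsurj z
    exact ⟨y, hzZ, hzV⟩
  have hchain : ∀ c ⊆ S, IsChain (· ⊆ ·) c → c.Nonempty → ∃ lb ∈ S, ∀ s ∈ c, lb ⊆ s := by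
    intro c hcS hc hcne
    obtain ⟨D₀, hD₀⟩ := hcne
    refine ⟨⋂₀ c, ⟨isClosed_sInter fun D hD => (hcS hD).1,
      (Set.sInter_subset_of_mem hD₀).trans (hcS hD₀).2.1, fun V hV hxV => ?_⟩,
      fun s hs => Set.sInter_subset_of_mem hs⟩
    have hK : IsCompact (f ⁻¹' V) := hf.isCompact_preimage_of_isOpen (hB.isOpen hV) (hBc V hV)
    have hKne : (f ⁻¹' V).Nonempty := by
      obtain ⟨y, hy⟩ := hsurj x
      exact ⟨y, by simpa [hy] using hxV⟩
    exact sInter_chain_inter_compact_nonempty hK hKne hc (fun D hD => (hcS hD).1)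
      (fun D hD => (hcS hD).2.2 V hV hxV)
  obtain ⟨D, hDC, hDS, hDmin⟩ := zorn_superset_nonempty S hchain C hCS
  -- D is irreducible
  have hDne : D.Nonempty := by
    obtain ⟨V₀, hV₀B, hxV₀, -⟩ := hB.exists_subset_of_mem_open (Set.mem_univ x) isOpen_univ
    exact (hDS.2.2 V₀ hV₀B hxV₀).mono Set.inter_subset_left
  have hDcl : IsClosed D := hDS.1
  have hDirr : IsIrreducible D := by
    refine ⟨hDne, fun u v hu hv ⟨a, haD, hau⟩ ⟨b, hbD, hbv⟩ => ?_⟩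
    have step : ∀ w : Set Y, IsOpen w → ∀ p, p ∈ D → p ∈ w →
        ∃ V ∈ B, x ∈ V ∧ D ∩ f ⁻¹' V ⊆ w := by
      intro w hw p hpD hpw
      by_contra hcon
      push_neg at hcon
      have hDw : D ∩ wᶜ ∈ S := by
        refine ⟨hDcl.inter (isClosed_compl_iff.2 hw), Set.inter_subset_left.trans hDS.2.1,
          fun V hV hxV => ?_⟩
        obtain ⟨q, hq, hqw⟩ := Set.not_subset.1 (hcon V hV hxV)
        exact ⟨q, ⟨hq.1, hqw⟩, hq.2⟩
      have := hDmin hDw Set.inter_subset_left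
      exact (this hpD).2 hpw
    obtain ⟨V₁, hV₁B, hxV₁, hsub₁⟩ := step u hu a haD hau
    obtain ⟨V₂, hV₂B, hxV₂, hsub₂⟩ := step v hv b hbD hbv
    obtain ⟨q, hqD, hqV⟩ := hDS.2.2 (V₁ ∩ V₂) (hBi V₁ hV₁B V₂ hV₂B) ⟨hxV₁, hxV₂⟩
    exact ⟨q, hqD, hsub₁ ⟨hqD, hqV.1⟩, hsub₂ ⟨hqD, hqV.2⟩⟩
  obtain ⟨η, hη⟩ := QuasiSober.sober hDirr hDcl
  have hηV : ∀ V ∈ B, x ∈ V → η ∈ f ⁻¹' V := by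
    intro V hV hxV
    obtain ⟨d, hdD, hdV⟩ := hDS.2.2 V hV hxV
    have : d ∈ closure ({η} : Set Y) := hη ▸ hdD
    obtain ⟨e, heV, he⟩ := mem_closure_iff.1 this _ ((hB.isOpen hV).preimage hf.continuous) hdV
    rwa [Set.mem_singleton_iff.1 he] at heV
  have hxcl : x ∈ closure ({f η} : Set X) := by
    rw [mem_closure_iff]
    intro o ho hxo
    obtain ⟨V, hVB, hxV, hVo⟩ := hB.exists_subset_of_mem_open hxo ho
    exact ⟨f η, hVo (hηV V hVB hxV), rfl⟩
  have hηZ : f η ∈ Z := hDS.2.1 (hη ▸ subset_closure (Set.mem_singleton η))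
  obtain ⟨y, hy⟩ := hsurj x
  obtain ⟨y', hyy', hfy'⟩ := hgen y (f η) (by rw [hy]; exact hxcl)
  have hyU : y ∈ f ⁻¹' U := by simp [hy, hxU]
  have hy'U : y' ∈ f ⁻¹' U := by
    obtain ⟨e, heU, he⟩ := mem_closure_iff.1 hyy' _ h hyU
    rwa [Set.mem_singleton_iff.1 he] at heU
  rw [Set.mem_preimage, hfy'] at hy'U
  exact hηZ hy'U
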